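/- Let H, A : ℝ² → ℝ² satisfy: H continuous, A linear with matrix ((a,b),(c,d)) in the standard basis, H(u+m,v+n) = H(u,v) + A(m,n) for all integer (m,n), and H maps lines of slope λ into lines of slope λ̃, where λ, λ̃ are irrational. Then a + bλ ≠ 0 and λ̃ = (c + dλ)/(a + bλ). -/

import Mathlib

/-- If `A` has matrix `((a,b),(c,d))`, then `a + bλ ≠ 0` and `λ̃ = (c + dλ)/(a + bλ)`. -/
theorem stmt2 (H : ℝ × ℝ → ℝ × ℝ) (a b c d : ℝ)
    (hH : Continuous H)
    (hA : a * d - b * c ≠ 0)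
    (hequiv : ∀ (u v : ℝ) (m n : ℤ),
      H (u + m, v + n) = H (u, v) + (a * m + b * n, c * m + d * n))
    (lam lamt : ℝ) (hlam : Irrational lam) (hlamt : Irrational lamt)
    (hmaps : ∀ cst : ℝ, ∃ cst' : ℝ, ∀ u v : ℝ, v - lam * u = cst →
      (H (u, v)).2 - lamt * (H (u, v)).1 = cst') :
    a + b * lam ≠ 0 ∧ lamt = (c + d * lam) / (a + b * lam) := by
  set g : ℝ → ℝ := fun s => (H (0, s)).2 - lamt * (H (0, s)).1 with hg
  have hgc : Continuous g := by
    apply Continuous.sub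
    · exact (hH.comp (by continuity)).snd
    · exact continuous_const.mul (hH.comp (by continuity)).fst
  -- key identity
  have hkey : ∀ m n : ℤ, g ((n : ℝ) - lam * m)
      = g 0 + ((c - lamt * a) * m + (d - lamt * b) * n) := by
    intro m n
    obtain ⟨cst', hcst'⟩ := hmaps ((n : ℝ) - lam * m)
    have h1 : g ((n : ℝ) - lam * m) = cst' := by
      have := hcst' 0 ((n : ℝ) - lam * m) (by ring)
      simpa [hg] using this
    have h2 : (H ((m : ℝ), (n : ℝ))).2 - lamt * (H ((m : ℝ), (n : ℝ))).1 = cst' :=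
      hcst' (m : ℝ) (n : ℝ) (by ring)
    have h3 : H ((m : ℝ), (n : ℝ)) = H (0, 0) + (a * m + b * n, c * m + d * n) := by
      have := hequiv 0 0 m n
      simpa using this
    have h4 : g 0 = (H (0, 0)).2 - lamt * (H (0, 0)).1 := rfl
    rw [h1, ← h2, h3, h4]
    simp [Prod.snd_add, Prod.fst_add]
    ring
  set β : ℝ := d - lamt * b with hβ
  set γ : ℝ := (c - lamt * a) + β * lam with hγ
  set h : ℝ → ℝ := fun s => g s - β * s with hh
  have hhc : Continuous h := hgc.sub (continuous_const.mul continuous_id)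
  have hkey2 : ∀ m : ℤ, h ((⌈lam * m⌉ : ℝ) - lam * m) = h 0 + γ * m := by
    intro m
    have := hkey m ⌈lam * m⌉
    simp only [hh, hγ, hβ] at *
    rw [this]
    ring
  -- boundedness on [0,1]
  obtain ⟨M, hM⟩ : ∃ M, ∀ x ∈ Set.Icc (0:ℝ) 1, |h x| ≤ M := by
    obtain ⟨M, hM⟩ := isCompact_Icc.exists_bound_of_continuousOn
      (hhc.continuousOn : ContinuousOn h (Set.Icc (0:ℝ) 1))
    exact ⟨M, fun x hx => hM x hx⟩
  have hγ0 : γ = 0 := by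
    by_contra hne
    obtain ⟨k, hk⟩ := exists_nat_gt ((M + |h 0|) / |γ|)
    have hmem : (⌈lam * (k:ℤ)⌉ : ℝ) - lam * (k:ℤ) ∈ Set.Icc (0:ℝ) 1 := by
      constructor
      · linarith [Int.le_ceil (lam * (k:ℤ))]
      · linarith [Int.ceil_lt_add_one (lam * (k:ℤ))]
    have hb := hM _ hmem
    rw [hkey2 k] at hb
    have h1 : |γ * (k:ℤ)| - |h 0| ≤ |h 0 + γ * (k:ℤ)| := by
      have := abs_add_le (h 0) (γ * (k:ℤ))
      have := abs_sub_abs_le_abs_sub (γ * (k:ℤ)) (-(h 0))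
      simp only [abs_neg] at this
      calc |γ * (k:ℤ)| - |h 0| ≤ |γ * (k:ℤ)- -(h 0)| := this
        _ = |h 0 + γ * (k:ℤ)| := by congr 1; ring
    have h2 : |γ * (k:ℤ)| ≤ M + |h 0| := by linarith
    have h3 : |γ| * k ≤ M + |h 0| := by
      have : |γ * (k:ℤ)| = |γ| * k := by
        rw [abs_mul]; simp
      linarith [this ▸ h2]
    have h4 : (M + |h 0|) / |γ| < k := hk
    have hγpos : 0 < |γ| := abs_pos.mpr hne
    have := (div_lt_iff₀ hγpos).mp h4
    nlinarith
  have hmain : c + d * lam = lamt * (a + b * lam) := by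
    have : (c - lamt * a) + (d - lamt * b) * lam = 0 := by
      rw [hβ] at hγ; linarith [hγ0, hγ.symm ▸ hγ0]
    linarith [this]
  have habl : a + b * lam ≠ 0 := by
    intro h0
    apply hA
    have hc : c + d * lam = 0 := by rw [hmain, h0, mul_zero]
    have ha' : a = -b * lam := by linarith
    have hc' : c = -d * lam := by linarith
    rw [ha', hc']; ring
  refine ⟨habl, ?_⟩
  field_simp
  rw [mul_comm lam b, eq_div_iff habl]; linarith [hmain]
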